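/- Let p be an odd prime, let Γ be the group presented as ⟨x, y, z : x^p = y^p = z^p = (xyz)^p = 1⟩, and let i, j be integers with 1 ≤ i, j ≤ p-1 such that p does not divide i + j + 1. Let φ : Γ → ℤ/pℤ be the (well-defined) group homomorphism to the additive group ℤ/pℤ determined by φ(x) = 1, φ(y) = i, φ(z) = j. Then φ is surjective and its kernel is exactly the subgroup of Γ generated by the 2p elements x^{ni} (x^i y⁻¹) x^{-ni} and x^{nj} (x^j z⁻¹) x^{-nj} for n = 0, 1, ..., p-1. -/

import Mathlib

/-- The relations of the presentation `⟨x, y, z : x^p = y^p = z^p = (xyz)^p = 1⟩`. -/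
def rels3 (p : ℕ) : Set (FreeGroup (Fin 3)) :=
  {FreeGroup.of 0 ^ p, FreeGroup.of 1 ^ p, FreeGroup.of 2 ^ p,
   (FreeGroup.of 0 * FreeGroup.of 1 * FreeGroup.of 2) ^ p}

/-- The group `Γ = ⟨x, y, z : x^p = y^p = z^p = (xyz)^p = 1⟩`. -/
def Gamma3 (p : ℕ) : Type := PresentedGroup (rels3 p)

instance (p : ℕ) : Group (Gamma3 p) := by unfold Gamma3; infer_instance

/-- The generator `x` of `Γ`. -/
def xg (p : ℕ) : Gamma3 p := PresentedGroup.of 0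

/-- The generator `y` of `Γ`. -/
def yg (p : ℕ) : Gamma3 p := PresentedGroup.of 1

/-- The generator `z` of `Γ`. -/
def zg (p : ℕ) : Gamma3 p := PresentedGroup.of 2

namespace Stmt8Aux

lemma mk_eq_one {p : ℕ} {r : FreeGroup (Fin 3)} (hr : r ∈ rels3 p) :
    (PresentedGroup.mk (rels3 p) r : Gamma3 p) = 1 :=
  (QuotientGroup.eq_one_iff _).mpr (Subgroup.subset_normalClosure hr)

lemma xg_pow_p {p : ℕ} : (xg p) ^ p = 1 := by
  have h := mk_eq_one (p := p) (r := FreeGroup.of 0 ^ p) (by simp [rels3])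
  rw [map_pow] at h
  exact h

lemma xg_zpow_congr {p : ℕ} {a b : ℤ} (h : (p : ℤ) ∣ a - b) :
    xg p ^ a = xg p ^ b := by
  obtain ⟨k, hk⟩ := h
  have ha : a = b + p * k := by linarith
  calc xg p ^ a = xg p ^ b * (xg p ^ (p : ℤ)) ^ k := by rw [ha, zpow_add, zpow_mul]
  _ = xg p ^ b := by rw [zpow_natCast, xg_pow_p, one_zpow, mul_one]

lemma conj_form {p : ℕ} (hp : p.Prime) {i : ℕ} (hi : ¬ p ∣ i) (a : Gamma3 p) (m : ℤ)
    (n : ℕ) (hn : n < p) :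
    ∃ n' : ℕ, n' < p ∧
      xg p ^ m * (xg p ^ (n * i) * a * (xg p ^ (n * i))⁻¹) * xg p ^ (-m)
        = xg p ^ (n' * i) * a * (xg p ^ (n' * i))⁻¹ := by
  haveI : Fact p.Prime := ⟨hp⟩
  set q : ZMod p := ((m : ZMod p) + (n * i : ℕ)) * (i : ZMod p)⁻¹ with hqdef
  refine ⟨q.val, q.val_lt, ?_⟩
  have hine : (i : ZMod p) ≠ 0 := by
    simpa [ZMod.natCast_eq_zero_iff] using hi
  have hq : ((q.val * i : ℕ) : ZMod p) = (m : ZMod p) + ((n * i : ℕ) : ZMod p) := by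
    push_cast
    rw [ZMod.natCast_val, ZMod.cast_id, hqdef, mul_assoc, inv_mul_cancel₀ hine, mul_one]
    push_cast
    ring
  have hdvd : (p : ℤ) ∣ (m + (n * i : ℕ)) - (q.val * i : ℕ) := by
    rw [← ZMod.intCast_zmod_eq_zero_iff_dvd]
    push_cast
    push_cast at hq
    rw [hq]
    ring
  have hx : xg p ^ (m + (n * i : ℕ) : ℤ) = xg p ^ ((q.val * i : ℕ) : ℤ) :=
    xg_zpow_congr hdvd
  calc xg p ^ m * (xg p ^ (n * i) * a * (xg p ^ (n * i))⁻¹) * xg p ^ (-m)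
      = xg p ^ (m + (n * i : ℕ) : ℤ) * a * (xg p ^ (m + (n * i : ℕ) : ℤ))⁻¹ := by
        rw [← zpow_natCast (xg p) (n * i)]
        group
  _ = xg p ^ ((q.val * i : ℕ) : ℤ) * a * (xg p ^ ((q.val * i : ℕ) : ℤ))⁻¹ := by rw [hx]
  _ = xg p ^ (q.val * i) * a * (xg p ^ (q.val * i))⁻¹ := by rw [zpow_natCast]

lemma ofAdd_one_pow {p : ℕ} (k : ℕ) :
    (Multiplicative.ofAdd (1 : ZMod p)) ^ k = Multiplicative.ofAdd (k : ZMod p) := by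
  rw [← ofAdd_nsmul, nsmul_eq_mul, mul_one]

lemma ofAdd_one_zpow {p : ℕ} (k : ℤ) :
    (Multiplicative.ofAdd (1 : ZMod p)) ^ k = Multiplicative.ofAdd ((k : ZMod p)) := by
  rw [← ofAdd_zsmul, zsmul_eq_mul, mul_one]

end Stmt8Aux

open Stmt8Aux in
theorem stmt_8 (p : ℕ) (hp : p.Prime) (hodd : Odd p) (i j : ℕ)
    (hi1 : 1 ≤ i) (hi2 : i ≤ p - 1) (hj1 : 1 ≤ j) (hj2 : j ≤ p - 1)
    (hij : ¬ p ∣ (i + j + 1)) :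
    (∃ φ : Gamma3 p →* Multiplicative (ZMod p),
        φ (xg p) = Multiplicative.ofAdd (1 : ZMod p) ∧
        φ (yg p) = Multiplicative.ofAdd (i : ZMod p) ∧
        φ (zg p) = Multiplicative.ofAdd (j : ZMod p)) ∧
    (∀ φ : Gamma3 p →* Multiplicative (ZMod p),
        φ (xg p) = Multiplicative.ofAdd (1 : ZMod p) →
        φ (yg p) = Multiplicative.ofAdd (i : ZMod p) →
        φ (zg p) = Multiplicative.ofAdd (j : ZMod p) →
        Function.Surjective φ ∧
        φ.ker = Subgroup.closure
          {g : Gamma3 p | ∃ n : ℕ, n < p ∧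
            (g = xg p ^ (n * i) * (xg p ^ i * (yg p)⁻¹) * (xg p ^ (n * i))⁻¹ ∨
             g = xg p ^ (n * j) * (xg p ^ j * (zg p)⁻¹) * (xg p ^ (n * j))⁻¹)}) := by
  haveI : Fact p.Prime := ⟨hp⟩
  have hppos : 0 < p := hp.pos
  have hpi : ¬ p ∣ i := by
    intro h
    have := Nat.le_of_dvd (by omega) h
    omega
  have hpj : ¬ p ∣ j := by
    intro h
    have := Nat.le_of_dvd (by omega) h
    omega
  constructor
  · -- existence
    set f : Fin 3 → Multiplicative (ZMod p) :=
      ![Multiplicative.ofAdd (1 : ZMod p), Multiplicative.ofAdd (i : ZMod p),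
        Multiplicative.ofAdd (j : ZMod p)] with hf
    have key : ∀ c : ZMod p, (Multiplicative.ofAdd c) ^ p = 1 := by
      intro c
      rw [← ofAdd_nsmul, nsmul_eq_mul, ZMod.natCast_self, zero_mul, ofAdd_zero]
    have h : ∀ r ∈ rels3 p, FreeGroup.lift f r = 1 := by
      intro r hr
      simp only [rels3, Set.mem_insert_iff, Set.mem_singleton_iff] at hr
      rcases hr with rfl | rfl | rfl | rfl
      · rw [map_pow, FreeGroup.lift_apply_of]; exact key _
      · rw [map_pow, FreeGroup.lift_apply_of]; exact key _
      · rw [map_pow, FreeGroup.lift_apply_of]; exact key _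
      · rw [map_pow, map_mul, map_mul, FreeGroup.lift_apply_of, FreeGroup.lift_apply_of,
          FreeGroup.lift_apply_of]
        show ((Multiplicative.ofAdd (1 : ZMod p)) * Multiplicative.ofAdd (i : ZMod p) *
          Multiplicative.ofAdd (j : ZMod p)) ^ p = 1
        rw [← ofAdd_add, ← ofAdd_add]
        exact key _
    refine ⟨PresentedGroup.toGroup h, ?_, ?_, ?_⟩
    · exact PresentedGroup.toGroup.of h
    · exact PresentedGroup.toGroup.of h
    · exact PresentedGroup.toGroup.of h
  · -- main part
    intro φ hx hy hz
    set S : Set (Gamma3 p) :=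
      {g : Gamma3 p | ∃ n : ℕ, n < p ∧
        (g = xg p ^ (n * i) * (xg p ^ i * (yg p)⁻¹) * (xg p ^ (n * i))⁻¹ ∨
         g = xg p ^ (n * j) * (xg p ^ j * (zg p)⁻¹) * (xg p ^ (n * j))⁻¹)} with hS
    set N : Subgroup (Gamma3 p) := Subgroup.closure S with hN
    -- conjugation stability
    have conjS : ∀ (m : ℤ) (s : Gamma3 p), s ∈ S → xg p ^ m * s * xg p ^ (-m) ∈ S := by
      intro m s hs
      obtain ⟨n, hn, hcase | hcase⟩ := hs
      · obtain ⟨n', hn', heq⟩ := conj_form hp hpi (xg p ^ i * (yg p)⁻¹) m n hn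
        exact ⟨n', hn', Or.inl (by rw [hcase, heq])⟩
      · obtain ⟨n', hn', heq⟩ := conj_form hp hpj (xg p ^ j * (zg p)⁻¹) m n hn
        exact ⟨n', hn', Or.inr (by rw [hcase, heq])⟩
    have conjN : ∀ (m : ℤ) (g : Gamma3 p), g ∈ N → xg p ^ m * g * xg p ^ (-m) ∈ N := by
      intro m g hg
      induction hg using Subgroup.closure_induction with
      | mem s hs => exact Subgroup.subset_closure (conjS m s hs)
      | one => simpa using N.one_mem
      | mul a b _ _ ha hb =>
          have : xg p ^ m * (a * b) * xg p ^ (-m)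
              = (xg p ^ m * a * xg p ^ (-m)) * (xg p ^ m * b * xg p ^ (-m)) := by group
          rw [this]; exact N.mul_mem ha hb
      | inv a _ ha =>
          have : xg p ^ m * a⁻¹ * xg p ^ (-m) = (xg p ^ m * a * xg p ^ (-m))⁻¹ := by group
          rw [this]; exact N.inv_mem ha
    -- the subgroup of elements n * x^m
    set K : Subgroup (Gamma3 p) :=
      { carrier := {g | ∃ n ∈ N, ∃ m : ℤ, g = n * xg p ^ m}
        one_mem' := ⟨1, N.one_mem, 0, by simp⟩
        mul_mem' := by
          rintro a b ⟨n1, hn1, m1, rfl⟩ ⟨n2, hn2, m2, rfl⟩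
          refine ⟨n1 * (xg p ^ m1 * n2 * xg p ^ (-m1)), N.mul_mem hn1 (conjN m1 n2 hn2),
            m1 + m2, by group⟩
        inv_mem' := by
          rintro a ⟨n, hn, m, rfl⟩
          exact ⟨xg p ^ (-m) * n⁻¹ * xg p ^ m, by simpa using conjN (-m) n⁻¹ (N.inv_mem hn),
            -m, by group⟩ } with hK
    have hyS : xg p ^ i * (yg p)⁻¹ ∈ S := by
      refine ⟨0, hppos, Or.inl ?_⟩
      simp
    have hzS : xg p ^ j * (zg p)⁻¹ ∈ S := by
      refine ⟨0, hppos, Or.inr ?_⟩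
      simp
    have hKtop : ∀ g : Gamma3 p, g ∈ K := by
      intro g
      refine PresentedGroup.generated_by (rels3 p) K ?_ g
      intro t
      fin_cases t
      · exact ⟨1, N.one_mem, 1, by simp [xg]; exact (zpow_one (xg p)).symm⟩
      · refine ⟨(xg p ^ i * (yg p)⁻¹)⁻¹, N.inv_mem (Subgroup.subset_closure hyS), (i : ℤ), ?_⟩
        show yg p = _
        rw [zpow_natCast]
        group
      · refine ⟨(xg p ^ j * (zg p)⁻¹)⁻¹, N.inv_mem (Subgroup.subset_closure hzS), (j : ℤ), ?_⟩
        show zg p = _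
        rw [zpow_natCast]
        group
    -- N ≤ ker φ
    have hNker : N ≤ φ.ker := by
      rw [hN]
      refine (Subgroup.closure_le _).mpr ?_
      rintro s ⟨n, hn, hcase | hcase⟩ <;>
        simp only [MonoidHom.mem_ker, SetLike.mem_coe, hcase, map_mul, map_pow, map_inv,
          hx, hy, hz, ofAdd_one_pow] <;>
      · rw [← ofAdd_neg, ← ofAdd_add, add_neg_cancel, ofAdd_zero, mul_one, ← ofAdd_neg,
          ← ofAdd_add, add_neg_cancel, ofAdd_zero]
    constructor
    · -- surjectivity
      intro c
      refine ⟨xg p ^ (Multiplicative.toAdd c).val, ?_⟩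
      rw [map_pow, hx, ofAdd_one_pow, ZMod.natCast_val, ZMod.cast_id]
      rfl
    · refine le_antisymm ?_ hNker
      intro g hg
      obtain ⟨n, hn, m, rfl⟩ := hKtop g
      have hφn : φ n = 1 := hNker hn
      have hφ : φ (n * xg p ^ m) = Multiplicative.ofAdd ((m : ZMod p)) := by
        rw [map_mul, map_zpow, hx, hφn, one_mul, ofAdd_one_zpow]
      rw [MonoidHom.mem_ker, hφ] at hg
      have hm0 : (m : ZMod p) = 0 := by
        have := Multiplicative.ofAdd.injective (hg.trans (ofAdd_zero).symm)
        exact this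
      have : xg p ^ m = 1 := by
        have hd : (p : ℤ) ∣ m - 0 := by
          rw [sub_zero, ← ZMod.intCast_zmod_eq_zero_iff_dvd]
          exact hm0
        simpa using xg_zpow_congr hd
      rw [this, mul_one]
      exact hn
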